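/- Let N ≥ 2, B_1 ⊂ ℝ^N the unit ball, v_N(x) = -ln(V_N (1+|x|^(N/(N-1)))^N), and ω̃_N = N^N (N/(N-1))^(N-1) ω_{N-1}. Then lim_{r→∞} [ (1/ω̃_N) ∫_{B_r} |∇v_N|^N dx - (N/(N-1)) ln r ] = - Σ_{k=1}^{N-1} 1/k, where B_r is the ball of radius r centered at the origin. -/

import Mathlib

open MeasureTheory Filter Finset

lemma phi_deriv (n : ℕ) (t : ℝ) (ht : 0 ≤ t) :
    HasDerivAt (fun t : ℝ => Real.log (1+t) - ∑ k ∈ Finset.range n, (t/(1+t))^(k+1)/(k+1))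
      (t^n/(1+t)^(n+1)) t := by
  have h1 : (0:ℝ) < 1 + t := by linarith
  have hu : HasDerivAt (fun t : ℝ => t/(1+t)) (1/(1+t)^2) t := by
    have h := (hasDerivAt_id t).div ((hasDerivAt_id t).const_add 1) h1.ne'
    simp only [id_eq] at h
    refine h.congr_deriv (Eq.symm ?_)
    field_simp
    ring
  have hlog : HasDerivAt (fun t : ℝ => Real.log (1+t)) (1/(1+t)) t := by
    have h := ((hasDerivAt_id t).const_add 1).log h1.ne'
    simpa using h
  have hsum : HasDerivAt (fun t : ℝ => ∑ k ∈ Finset.range n, (t/(1+t))^(k+1)/(k+1))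
      (∑ k ∈ Finset.range n, (t/(1+t))^k * (1/(1+t)^2)) t := by
    apply HasDerivAt.fun_sum
    intro k hk
    have h := (hu.pow (k+1)).div_const ((k:ℝ)+1)
    refine h.congr_deriv (Eq.symm ?_)
    push_cast
    field_simp
  have h := hlog.fun_sub hsum
  refine h.congr_deriv (Eq.symm ?_)
  rw [← Finset.sum_mul]
  have hx1 : t/(1+t) ≠ 1 := by
    intro h
    rw [div_eq_one_iff_eq h1.ne'] at h
    linarith
  rw [geom_sum_eq hx1]
  have h2 : t/(1+t) - 1 = -(1/(1+t)) := by field_simp; ring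
  rw [h2, div_pow]
  field_simp
  ring

lemma anti_deriv (N : ℕ) (hN : 2 ≤ N) (y : ℝ) (hy : 0 ≤ y) :
    HasDerivAt (fun y : ℝ => (((N:ℝ)*((N:ℝ)/((N:ℝ)-1)))^N/((N:ℝ)/((N:ℝ)-1))) *
        (Real.log (1+y^((N:ℝ)/((N:ℝ)-1))) -
          ∑ k ∈ Finset.range (N-1), (y^((N:ℝ)/((N:ℝ)-1))/(1+y^((N:ℝ)/((N:ℝ)-1))))^(k+1)/(k+1)))
      ((y:ℝ)^(N-1) * ((N:ℝ)*((N:ℝ)/((N:ℝ)-1))*y^((N:ℝ)/((N:ℝ)-1)-1)/(1+y^((N:ℝ)/((N:ℝ)-1))))^N) y := by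
  set p : ℝ := (N:ℝ)/((N:ℝ)-1) with hp
  have hN2 : (2:ℝ) ≤ (N:ℝ) := by exact_mod_cast hN
  have hN1 : (0:ℝ) < (N:ℝ)-1 := by linarith
  have hp1 : 1 < p := by
    rw [hp, lt_div_iff₀ hN1]; linarith
  have hppos : 0 < p := by linarith
  have h0 : HasDerivAt (fun y : ℝ => y^p) (p * y^(p-1)) y :=
    Real.hasDerivAt_rpow_const (Or.inr hp1.le)
  have hΦ := (phi_deriv (N-1) (y^p) (Real.rpow_nonneg hy p)).comp y h0
  have h := hΦ.const_mul (((N:ℝ)*p)^N/p)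
  have hNsub : N - 1 + 1 = N := by omega
  rw [hNsub] at h
  refine h.congr_deriv (Eq.symm ?_)
  have hcast : ((N-1 : ℕ) : ℝ) = (N:ℝ) - 1 := by
    rw [Nat.cast_sub (by omega)]; norm_num
  rcases eq_or_lt_of_le hy with hy0 | hy0
  · rw [← hy0]
    have h00 : (0:ℝ)^p = 0 := Real.zero_rpow hppos.ne'
    simp [h00, zero_pow (by omega : N - 1 ≠ 0)]
  · have hyp : (0:ℝ) < y^p := Real.rpow_pos_of_pos hy0 p
    have hden : (0:ℝ) < 1 + y^p := by linarith
    have e1 : (y ^ (p-1))^N = y^((p-1)*N) := by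
      rw [← Real.rpow_natCast (y^(p-1)) N, ← Real.rpow_mul hy]
    have e2 : (y ^ p)^(N-1) = y^(p*((N:ℝ)-1)) := by
      rw [← Real.rpow_natCast (y^p) (N-1), ← Real.rpow_mul hy, hcast]
    have e3 : y^(N-1) = y^((N:ℝ)-1) := by
      rw [← Real.rpow_natCast y (N-1), hcast]
    have key : ∀ a b : ℝ, y ^ a * y ^ b = y ^ (a+b) :=
      fun a b => (Real.rpow_add hy0 a b).symm
    rw [div_pow, mul_pow, mul_pow, e1, e2, e3]
    rw [mul_div_assoc']
    rw [show y ^ ((N:ℝ)-1) * ((N:ℝ)^N * p^N * y^((p-1)*(N:ℝ))) =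
        (N:ℝ)^N * p^N * (y ^ ((N:ℝ)-1) * y^((p-1)*(N:ℝ))) by ring, key,
      show ((N:ℝ)-1) + (p-1)*(N:ℝ) = p*(N:ℝ)-1 by ring]
    rw [show y ^ (p*((N:ℝ)-1)) / (1 + y^p)^N * (p * y^(p-1)) =
        p * (y ^ (p*((N:ℝ)-1)) * y^(p-1)) / (1 + y^p)^N by ring, key,
      show p*((N:ℝ)-1) + (p-1) = p*(N:ℝ)-1 by ring]
    field_simp

lemma grad_norm (N : ℕ) (hN : 2 ≤ N) (V : ℝ) (hV : 0 < V)
    (v : EuclideanSpace ℝ (Fin N) → ℝ)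
    (hv : ∀ x, v x = -Real.log (V * (1 + ‖x‖ ^ ((N : ℝ) / ((N : ℝ) - 1))) ^ N))
    (x : EuclideanSpace ℝ (Fin N)) (hx : x ≠ 0) :
    ‖gradient v x‖ = (N:ℝ)*((N:ℝ)/((N:ℝ)-1))*‖x‖^((N:ℝ)/((N:ℝ)-1)-1)
      /(1+‖x‖^((N:ℝ)/((N:ℝ)-1))) := by
  set p : ℝ := (N:ℝ)/((N:ℝ)-1) with hp
  have hN2 : (2:ℝ) ≤ (N:ℝ) := by exact_mod_cast hN
  have hN1 : (0:ℝ) < (N:ℝ)-1 := by linarith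
  have hp1 : 1 < p := by rw [hp, lt_div_iff₀ hN1]; linarith
  have hxn : 0 < ‖x‖ := norm_pos_iff.2 hx
  have hsq : ∀ y : EuclideanSpace ℝ (Fin N), ((‖y‖^2 : ℝ)) ^ (p/2) = ‖y‖ ^ p := by
    intro y
    rw [← Real.rpow_natCast ‖y‖ 2, ← Real.rpow_mul (norm_nonneg y)]
    norm_num
    rw [show (2:ℝ)*(p/2) = p by ring]
  set φ : ℝ → ℝ := fun s => -Real.log V - N * Real.log (1 + s ^ (p/2)) with hφdef
  have hv' : v = fun y => φ (‖y‖^2) := by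
    funext y
    have hpos : (0:ℝ) < 1 + ‖y‖ ^ p := by
      have := Real.rpow_nonneg (norm_nonneg y) p; linarith
    rw [hv y, hφdef]
    simp only [hsq y]
    rw [Real.log_mul hV.ne' (by positivity), Real.log_pow]
    ring
  set s₀ : ℝ := ‖x‖^2 with hs₀
  have hs₀pos : 0 < s₀ := by positivity
  have hs₀p : s₀ ^ (p/2) = ‖x‖ ^ p := hsq x
  have hdenpos : (0:ℝ) < 1 + s₀ ^ (p/2) := by
    have := Real.rpow_nonneg hs₀pos.le (p/2); linarith
  have hA : HasDerivAt (fun s:ℝ => s^(p/2)) ((p/2)*s₀^(p/2-1)) s₀ :=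
    Real.hasDerivAt_rpow_const (Or.inl hs₀pos.ne')
  have hB : HasDerivAt (fun s:ℝ => Real.log (1 + s ^ (p/2)))
      ((p/2)*s₀^(p/2-1)/(1 + s₀ ^ (p/2))) s₀ := by
    simpa using (hA.const_add 1).log hdenpos.ne'
  have hφ : HasDerivAt φ (-((N:ℝ) * ((p/2)*s₀^(p/2-1)/(1 + s₀ ^ (p/2))))) s₀ := by
    simpa [hφdef] using (hB.const_mul (N:ℝ)).const_sub (-Real.log V)
  set d : ℝ := -((N:ℝ) * ((p/2)*s₀^(p/2-1)/(1 + s₀ ^ (p/2)))) with hd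
  have hw : HasFDerivAt (fun y : EuclideanSpace ℝ (Fin N) => ‖y‖^2)
      (2 • (innerSL ℝ x)) x := (hasStrictFDerivAt_norm_sq x).hasFDerivAt
  have hcomp : HasFDerivAt (fun y : EuclideanSpace ℝ (Fin N) => φ (‖y‖^2))
      (d • (2 • (innerSL ℝ x))) x := hφ.comp_hasFDerivAt (f := fun y : EuclideanSpace ℝ (Fin N) => ‖y‖^2) x hw
  have hgrad : HasGradientAt v ((2*d) • x) x := by
    rw [hasGradientAt_iff_hasFDerivAt, hv']
    refine hcomp.congr_fderiv (Eq.symm ?_)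
    ext y
    simp [InnerProductSpace.toDual_apply_apply, real_inner_smul_left, two_smul]
    ring
  rw [hgrad.gradient, norm_smul]
  have hrp : s₀^(p/2-1) = ‖x‖^(p-2) := by
    rw [hs₀, ← Real.rpow_natCast ‖x‖ 2, ← Real.rpow_mul (norm_nonneg x)]
    norm_num
    ring_nf
  have hnonneg : 0 ≤ (N:ℝ) * ((p/2)*s₀^(p/2-1)/(1 + s₀ ^ (p/2))) := by
    have h1 : 0 ≤ s₀^(p/2-1) := Real.rpow_nonneg hs₀pos.le _
    have h2 : (0:ℝ) < p := by linarith
    positivity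
  rw [Real.norm_eq_abs, hd]
  rw [abs_of_nonpos (by linarith [hnonneg] : 2 * -((N:ℝ) * ((p/2)*s₀^(p/2-1)/(1 + s₀ ^ (p/2)))) ≤ 0)]
  rw [hrp, hs₀p]
  have hmerge : ‖x‖^(p-2) * ‖x‖ = ‖x‖^(p-1) := by
    nth_rewrite 2 [← Real.rpow_one ‖x‖]
    rw [← Real.rpow_add hxn]
    congr 1
    ring
  field_simp
  rw [← hmerge]

lemma oneD (N : ℕ) (hN : 2 ≤ N) (r : ℝ) (hr : 0 < r) :
    ∫ y in Set.Ioo (0:ℝ) r, (y:ℝ)^(N-1) *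
        ((N:ℝ)*((N:ℝ)/((N:ℝ)-1))*y^((N:ℝ)/((N:ℝ)-1)-1)/(1+y^((N:ℝ)/((N:ℝ)-1))))^N =
      (((N:ℝ)*((N:ℝ)/((N:ℝ)-1)))^N/((N:ℝ)/((N:ℝ)-1))) *
        (Real.log (1+r^((N:ℝ)/((N:ℝ)-1))) -
          ∑ k ∈ Finset.range (N-1), (r^((N:ℝ)/((N:ℝ)-1))/(1+r^((N:ℝ)/((N:ℝ)-1))))^(k+1)/(k+1)) := by
  set p : ℝ := (N:ℝ)/((N:ℝ)-1) with hp
  have hN2 : (2:ℝ) ≤ (N:ℝ) := by exact_mod_cast hN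
  have hN1 : (0:ℝ) < (N:ℝ)-1 := by linarith
  have hp1 : 1 < p := by rw [hp, lt_div_iff₀ hN1]; linarith
  rw [← MeasureTheory.integral_Ioc_eq_integral_Ioo, ← intervalIntegral.integral_of_le hr.le]
  have huIcc : Set.uIcc (0:ℝ) r = Set.Icc 0 r := Set.uIcc_of_le hr.le
  have hderiv : ∀ y ∈ Set.uIcc (0:ℝ) r,
      HasDerivAt (fun y : ℝ => (((N:ℝ)*p)^N/p) *
        (Real.log (1+y^p) - ∑ k ∈ Finset.range (N-1), (y^p/(1+y^p))^(k+1)/(k+1)))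
        ((y:ℝ)^(N-1) * ((N:ℝ)*p*y^(p-1)/(1+y^p))^N) y := by
    intro y hy
    rw [huIcc] at hy
    exact anti_deriv N hN y hy.1
  have hcont : ContinuousOn
      (fun y : ℝ => (y:ℝ)^(N-1) * ((N:ℝ)*p*y^(p-1)/(1+y^p))^N) (Set.uIcc 0 r) := by
    rw [huIcc]
    have c1 : ContinuousOn (fun y:ℝ => y ^ (p-1)) (Set.Icc 0 r) := fun y _ =>
      (Real.continuousAt_rpow_const y (p-1) (Or.inr (by linarith))).continuousWithinAt
    have c2 : ContinuousOn (fun y:ℝ => y ^ p) (Set.Icc 0 r) := fun y _ =>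
      (Real.continuousAt_rpow_const y p (Or.inr (by linarith))).continuousWithinAt
    have hne : ∀ y ∈ Set.Icc (0:ℝ) r, 1 + y^p ≠ 0 := by
      intro y hy
      have := Real.rpow_nonneg hy.1 p
      positivity
    exact ((continuous_pow (N-1)).continuousOn).mul
      ((((continuousOn_const.mul c1).div (continuousOn_const.add c2) hne)).pow N)
  rw [intervalIntegral.integral_eq_sub_of_hasDerivAt hderiv (hcont.intervalIntegrable)]
  have h0p : (0:ℝ)^p = 0 := Real.zero_rpow (by positivity)
  simp [h0p, zero_pow (by omega : N - 1 ≠ 0)]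


lemma ball_int (N : ℕ) (hN : 2 ≤ N) (g : ℝ → ℝ) (r : ℝ) :
    ∫ x in Metric.ball (0 : EuclideanSpace ℝ (Fin N)) r, g ‖x‖ =
      N * (volume (Metric.ball (0 : EuclideanSpace ℝ (Fin N)) 1)).toReal *
        ∫ y in Set.Ioo (0:ℝ) r, y^(N-1) * g y := by
  haveI : Nonempty (Fin N) := ⟨⟨0, by omega⟩⟩
  haveI : Nontrivial (EuclideanSpace ℝ (Fin N)) := inferInstance
  rw [← integral_indicator measurableSet_ball]
  have h1 : (Set.indicator (Metric.ball (0 : EuclideanSpace ℝ (Fin N)) r)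
      (fun x => g ‖x‖)) = fun x => (Set.Iio r).indicator g ‖x‖ := by
    funext x
    by_cases h : ‖x‖ < r <;>
      simp [Set.indicator, mem_ball_zero_iff, h]
  rw [h1, integral_fun_norm_addHaar volume ((Set.Iio r).indicator g)]
  simp only [finrank_euclideanSpace_fin, nsmul_eq_mul, smul_eq_mul]
  have h2 : ∀ y : ℝ, (y:ℝ)^(N-1) * (Set.Iio r).indicator g y =
      (Set.Iio r).indicator (fun y => y^(N-1) * g y) y := by
    intro y
    by_cases h : y ∈ Set.Iio r <;> simp [h]
  simp only [h2]
  rw [setIntegral_indicator measurableSet_Iio, Set.Ioi_inter_Iio]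
  simp only [measureReal_def]
  ring

theorem stmt13 (N : ℕ) (hN : 2 ≤ N) (V ω : ℝ)
    (hV : V = (volume (Metric.ball (0 : EuclideanSpace ℝ (Fin N)) 1)).toReal)
    (hω : ω = N * V)
    (v : EuclideanSpace ℝ (Fin N) → ℝ)
    (hv : ∀ x, v x = -Real.log (V * (1 + ‖x‖ ^ ((N : ℝ) / ((N : ℝ) - 1))) ^ N)) :
    Tendsto (fun r : ℝ =>
        (1 / ((N : ℝ) ^ N * ((N : ℝ) / ((N : ℝ) - 1)) ^ (N - 1) * ω)) *
          (∫ x in Metric.ball (0 : EuclideanSpace ℝ (Fin N)) r, ‖gradient v x‖ ^ N) -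
        ((N : ℝ) / ((N : ℝ) - 1)) * Real.log r)
      atTop (nhds (-∑ k ∈ Finset.range (N - 1), 1 / ((k : ℝ) + 1))) := by
  haveI : Nonempty (Fin N) := ⟨⟨0, by omega⟩⟩
  haveI : Nontrivial (EuclideanSpace ℝ (Fin N)) := inferInstance
  set p : ℝ := (N:ℝ)/((N:ℝ)-1) with hp
  have hN2 : (2:ℝ) ≤ (N:ℝ) := by exact_mod_cast hN
  have hN1 : (0:ℝ) < (N:ℝ)-1 := by linarith
  have hp1 : 1 < p := by rw [hp, lt_div_iff₀ hN1]; linarith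
  have hppos : (0:ℝ) < p := by linarith
  have hVpos : 0 < V := by
    rw [hV]
    exact ENNReal.toReal_pos (Metric.measure_ball_pos volume 0 one_pos).ne'
      measure_ball_lt_top.ne
  have hEq : ∀ r : ℝ, 1 ≤ r →
      (1 / ((N : ℝ) ^ N * p ^ (N - 1) * ω)) *
          (∫ x in Metric.ball (0 : EuclideanSpace ℝ (Fin N)) r, ‖gradient v x‖ ^ N) -
        p * Real.log r =
      (Real.log (1+r^p) - ∑ k ∈ Finset.range (N-1), (r^p/(1+r^p))^(k+1)/(k+1))
        - Real.log (r^p) := by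
    intro r hr
    have hr0 : (0:ℝ) < r := by linarith
    have hae : ∀ᵐ (x : EuclideanSpace ℝ (Fin N)) ∂volume, x ≠ 0 := by
      rw [ae_iff]
      have hset : {x : EuclideanSpace ℝ (Fin N) | ¬ x ≠ 0} = {0} := by ext x; simp
      rw [hset]
      exact measure_singleton 0
    have hI : (∫ x in Metric.ball (0 : EuclideanSpace ℝ (Fin N)) r, ‖gradient v x‖ ^ N)
        = ∫ x in Metric.ball (0 : EuclideanSpace ℝ (Fin N)) r,
            ((N:ℝ)*p*‖x‖^(p-1)/(1+‖x‖^p))^N := by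
      refine setIntegral_congr_ae measurableSet_ball ?_
      filter_upwards [hae] with x hx _
      rw [grad_norm N hN V hVpos v hv x hx]
    have hbi := ball_int N hN (fun y : ℝ => ((N:ℝ)*p*y^(p-1)/(1+y^p))^N) r
    beta_reduce at hbi
    rw [hI, hbi, oneD N hN r hr0, ← hV, hω]
    rw [← hp]
    have hpN : p^N = p^(N-1) * p := by
      rw [← pow_succ]
      congr 1
      omega
    rw [Real.log_rpow hr0, mul_pow, hpN]
    clear_value p
    have hne1 : (N:ℝ) ≠ 0 := by positivity
    have hne2 : p ≠ 0 := hppos.ne'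
    have hne3 : V ≠ 0 := hVpos.ne'
    have hne4 : ((N:ℝ))^N ≠ 0 := by positivity
    have hne5 : p^(N-1) ≠ 0 := by positivity
    field_simp
  have hu : Tendsto (fun t : ℝ => t/(1+t)) atTop (nhds 1) := by
    have h1 : Tendsto (fun t : ℝ => 1 - (1+t)⁻¹) atTop (nhds 1) := by
      have h2 : Tendsto (fun t : ℝ => (1+t)) atTop atTop :=
        tendsto_atTop_add_const_left _ 1 tendsto_id
      have h3 := h2.inv_tendsto_atTop
      simpa using (tendsto_const_nhds (x := (1:ℝ))).sub h3
    refine h1.congr' ?_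
    filter_upwards [eventually_gt_atTop 0] with t ht
    have : (1:ℝ) + t ≠ 0 := by linarith
    field_simp
    ring
  have hsum : Tendsto (fun t : ℝ => ∑ k ∈ Finset.range (N-1), (t/(1+t))^(k+1)/(k+1))
      atTop (nhds (∑ k ∈ Finset.range (N-1), 1 / ((k:ℝ)+1))) := by
    refine tendsto_finset_sum _ fun k _ => ?_
    have := (hu.pow (k+1)).div_const ((k:ℝ)+1)
    simpa using this
  have hlog : Tendsto (fun t : ℝ => Real.log (1+t) - Real.log t) atTop (nhds 0) := by
    have h1 : Tendsto (fun t : ℝ => t⁻¹ + 1) atTop (nhds 1) := by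
      simpa using tendsto_inv_atTop_zero.add_const (1:ℝ)
    have h2 := (Real.continuousAt_log one_ne_zero).tendsto.comp h1
    rw [Real.log_one] at h2
    refine h2.congr' ?_
    filter_upwards [eventually_gt_atTop 0] with t ht
    have h3 : (Real.log ∘ fun t : ℝ => t⁻¹ + 1) t = Real.log ((1+t)/t) := by
      simp only [Function.comp_apply]
      congr 1
      field_simp
    rw [h3, Real.log_div (by linarith) ht.ne']
  have hmain : Tendsto (fun t : ℝ =>
      (Real.log (1+t) - ∑ k ∈ Finset.range (N-1), (t/(1+t))^(k+1)/(k+1)) - Real.log t)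
      atTop (nhds (0 - ∑ k ∈ Finset.range (N-1), 1 / ((k:ℝ)+1))) := by
    refine (hlog.sub hsum).congr fun t => ?_
    ring
  have hrp : Tendsto (fun r : ℝ => r ^ p) atTop atTop := tendsto_rpow_atTop hppos
  have hcomp := hmain.comp hrp
  rw [zero_sub] at hcomp
  refine hcomp.congr' ?_
  filter_upwards [eventually_ge_atTop 1] with r hr
  exact (hEq r hr).symm
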